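/- For every c ∈ ℝ and r > 0, the operator norm of the interval matrix is at most one: ‖R_{c,r}‖_op ≤ 1. -/
import Mathlib

noncomputable section

open MeasureTheory
open Matrix
open scoped RealInnerProductSpace

def sinc (x : ℝ) : ℝ := if x = 0 then 1 else Real.sin x / x

def Rot (x : ℝ) : Matrix (Fin 2) (Fin 2) ℝ :=
  !![Real.cos x, -Real.sin x; Real.sin x, Real.cos x]

def RoPE {n : ℕ} (θ : Fin n → ℝ) (t : ℝ) :
    Matrix (Fin 2 × Fin n) (Fin 2 × Fin n) ℝ :=
  Matrix.blockDiagonal fun ℓ => Rot (θ ℓ * t)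

def RoTE {n : ℕ} (θ : Fin n → ℝ) (c r : ℝ) :
    Matrix (Fin 2 × Fin n) (Fin 2 × Fin n) ℝ :=
  Matrix.blockDiagonal fun ℓ => sinc (θ ℓ * r) • Rot (θ ℓ * c)

def Cnorm {n : ℕ} (θ : Fin n → ℝ) (r : ℝ) : ℝ :=
  (1 / (n : ℝ)) * ∑ ℓ : Fin n, sinc (θ ℓ * r)

def mApply {n : ℕ} (M : Matrix (Fin 2 × Fin n) (Fin 2 × Fin n) ℝ)
    (v : EuclideanSpace ℝ (Fin 2 × Fin n)) : EuclideanSpace ℝ (Fin 2 × Fin n) :=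
  Matrix.toEuclideanLin M v

def opNorm {n : ℕ} (M : Matrix (Fin 2 × Fin n) (Fin 2 × Fin n) ℝ) : ℝ :=
  ‖Matrix.toEuclideanCLM (𝕜 := ℝ) M‖

lemma abs_sinc_le_one (x : ℝ) : |sinc x| ≤ 1 := by
  unfold sinc
  split_ifs with h
  · simp
  · rw [abs_div]
    rw [div_le_one (abs_pos.mpr h)]
    exact Real.abs_sin_le_abs

theorem rote_opNorm_le_one (n : ℕ) (hn : 1 ≤ n) (θ : Fin n → ℝ)
    (c r : ℝ) (hr : 0 < r) :
    opNorm (RoTE θ c r) ≤ 1 := by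
  apply ContinuousLinearMap.opNorm_le_bound _ zero_le_one
  intro v
  rw [one_mul]
  rw [EuclideanSpace.norm_eq, EuclideanSpace.norm_eq]
  apply Real.sqrt_le_sqrt
  have happ : ∀ p, (Matrix.toEuclideanCLM (𝕜 := ℝ) (RoTE θ c r) v) p
      = ((RoTE θ c r) *ᵥ (fun q => v q)) p := fun p => rfl
  simp only [happ]
  rw [Fintype.sum_prod_type, Fintype.sum_prod_type, Finset.sum_comm]
  conv_rhs => rw [Finset.sum_comm]
  apply Finset.sum_le_sum
  intro ℓ _
  have hsc : Real.cos (θ ℓ * c) ^ 2 + Real.sin (θ ℓ * c) ^ 2 = 1 :=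
    Real.cos_sq_add_sin_sq _
  have hs : (sinc (θ ℓ * r)) ^ 2 ≤ 1 := by
    have := abs_sinc_le_one (θ ℓ * r)
    nlinarith [abs_nonneg (sinc (θ ℓ * r)), sq_abs (sinc (θ ℓ * r))]
  simp only [RoTE, Matrix.mulVec, dotProduct, Fintype.sum_prod_type,
    Matrix.blockDiagonal_apply, Rot, Matrix.smul_apply, smul_eq_mul, ite_mul, zero_mul,
    Finset.sum_ite_eq, Finset.mem_univ, if_true, Fin.sum_univ_two, Real.norm_eq_abs, sq_abs,
    Matrix.cons_val', Matrix.cons_val_zero, Matrix.cons_val_one, Matrix.head_cons,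
    Matrix.empty_val', Matrix.cons_val_fin_one, Matrix.head_fin_const, Matrix.of_apply]
  nlinarith [sq_nonneg (v (0, ℓ)), sq_nonneg (v (1, ℓ)), sq_nonneg (sinc (θ ℓ * r)),
    sq_nonneg (Real.cos (θ ℓ * c) * v (0, ℓ) - Real.sin (θ ℓ * c) * v (1, ℓ)),
    sq_nonneg (Real.sin (θ ℓ * c) * v (0, ℓ) + Real.cos (θ ℓ * c) * v (1, ℓ))]
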